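/- Continuity of the dispatch map under strong convexity: let x*(η) = argmin{c(x) : x ∈ X(η)} where c is μ-strongly convex and X(η) = {x : Ax ≤ b(η)} with b Lipschitz and X(η) nonempty for all η in a set U; if the feasible-set multifunction is Lipschitz in Hausdorff distance with constant κ (i.e., d_H(X(η₁), X(η₂)) ≤ κ‖η₁ − η₂‖), then x* is Hölder continuous on U: ‖x*(η₁) − x*(η₂)‖ ≤ sqrt((2G/μ)·κ‖η₁ − η₂‖) + κ‖η₁ − η₂‖, where G bounds the gradient of c on the relevant region. -/

import Mathlib

open Metric Filter Topology

section AuxLemmas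

variable {E : Type*} [NormedAddCommGroup E] [InnerProductSpace ℝ E] [CompleteSpace E]

/-- First-order lower bound for a strongly convex differentiable function. -/
lemma strong_first_order_aux {μ : ℝ} {c : E → ℝ} (hsc : StrongConvexOn Set.univ μ c)
    {x gx : E} (hg : HasGradientAt c gx x) (y : E) :
    c x + inner ℝ gx (y - x) + μ / 2 * ‖y - x‖ ^ 2 ≤ c y := by
  set Q : ℝ := μ / 2 * ‖x - y‖ ^ 2 with hQ
  set φ : ℝ → ℝ := fun t => c (x + t • (y - x)) with hφ
  have hline : HasDerivAt (fun t : ℝ => x + t • (y - x)) (y - x) 0 := by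
    simpa using ((hasDerivAt_id (0 : ℝ)).smul_const (y - x)).const_add x
  have hD : HasDerivAt φ (inner ℝ gx (y - x)) 0 := by
    have := hg.hasFDerivAt.comp_hasDerivAt_of_eq 0 hline (by simp)
    simpa [hφ, Function.comp_def, InnerProductSpace.toDual_apply_apply] using this
  have hslope : Filter.Tendsto (slope φ 0) (𝓝[>] (0 : ℝ)) (𝓝 (inner ℝ gx (y - x))) :=
    (hasDerivAt_iff_tendsto_slope.mp hD).mono_left
      (nhdsWithin_mono 0 (fun t ht => ne_of_gt ht))
  have hRHS : Filter.Tendsto (fun t : ℝ => c y - c x - (1 - t) * Q) (𝓝[>] (0 : ℝ))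
      (𝓝 (c y - c x - Q)) := by
    have hcont : Continuous (fun t : ℝ => c y - c x - (1 - t) * Q) := by continuity
    have h0 : c y - c x - (1 - (0 : ℝ)) * Q = c y - c x - Q := by ring
    exact (by simpa [h0] using hcont.tendsto 0 :
      Filter.Tendsto _ (𝓝 (0 : ℝ)) (𝓝 (c y - c x - Q))).mono_left nhdsWithin_le_nhds
  have hmem : Set.Ioo (0 : ℝ) 1 ∈ 𝓝[>] (0 : ℝ) :=
    Ioo_mem_nhdsGT_of_mem ⟨le_refl _, one_pos⟩
  have hev : ∀ᶠ t in 𝓝[>] (0 : ℝ), slope φ 0 t ≤ c y - c x - (1 - t) * Q := by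
    filter_upwards [hmem] with t ht
    have hineq := hsc.2 (Set.mem_univ x) (Set.mem_univ y)
      (show (0:ℝ) ≤ 1 - t by linarith [ht.2]) (le_of_lt ht.1) (show 1 - t + t = 1 by ring)
    have hcombo : (1 - t) • x + t • y = x + t • (y - x) := by
      rw [sub_smul, one_smul, smul_sub]; abel
    rw [hcombo] at hineq
    have hφt : φ t ≤ (1 - t) * c x + t * c y - (1 - t) * t * Q := by
      simpa [hφ, smul_eq_mul, hQ] using hineq
    have hφ0 : φ 0 = c x := by simp [hφ]
    have hslope_eq : slope φ 0 t = (φ t - c x) / t := by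
      rw [slope_def_field, hφ0]; ring_nf
    rw [hslope_eq, div_le_iff₀ ht.1]
    nlinarith [hφt]
  have hkey : inner ℝ gx (y - x) ≤ c y - c x - Q :=
    le_of_tendsto_of_tendsto hslope hRHS hev
  have hnorm : ‖x - y‖ = ‖y - x‖ := norm_sub_rev x y
  rw [hQ, hnorm] at hkey
  linarith

/-- Quadratic growth at a minimizer of a strongly convex function over a convex set. -/
lemma quad_growth_aux {μ : ℝ} {c : E → ℝ} (hsc : StrongConvexOn Set.univ μ c)
    {S : Set E} (hS : Convex ℝ S) {x₁ : E} (hx₁ : x₁ ∈ S)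
    (hmin : ∀ z ∈ S, c x₁ ≤ c z) {y : E} (hy : y ∈ S) :
    c x₁ + μ / 2 * ‖y - x₁‖ ^ 2 ≤ c y := by
  set Q : ℝ := μ / 2 * ‖x₁ - y‖ ^ 2 with hQ
  have hkey : ∀ t ∈ Set.Ioo (0 : ℝ) 1, Q * t ≤ c y - c x₁ := by
    intro t ht
    have hineq := hsc.2 (Set.mem_univ x₁) (Set.mem_univ y)
      (le_of_lt ht.1) (show (0:ℝ) ≤ 1 - t by linarith [ht.2]) (show t + (1 - t) = 1 by ring)
    have hcm : t • x₁ + (1 - t) • y ∈ S := hS hx₁ hy (le_of_lt ht.1) (by linarith [ht.2]) (by ring)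
    have hmin' := hmin _ hcm
    have h1t : (0 : ℝ) < 1 - t := by linarith [ht.2]
    simp only [smul_eq_mul] at hineq
    rw [hQ]
    nlinarith [hineq, hmin', h1t, mul_pos h1t ht.1]
  have htend : Filter.Tendsto (fun t : ℝ => Q * t) (𝓝[<] (1 : ℝ)) (𝓝 Q) := by
    have hcont : Continuous fun t : ℝ => Q * t := by continuity
    have : Filter.Tendsto (fun t : ℝ => Q * t) (𝓝 (1 : ℝ)) (𝓝 Q) := by
      simpa using hcont.tendsto 1
    exact this.mono_left nhdsWithin_le_nhds
  have hmem : Set.Ioo (0 : ℝ) 1 ∈ 𝓝[<] (1 : ℝ) :=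
    Ioo_mem_nhdsLT_of_mem ⟨one_pos, le_refl _⟩
  have hQle : Q ≤ c y - c x₁ := by
    refine le_of_tendsto htend ?_
    filter_upwards [hmem] with t ht using hkey t ht
  have hnorm : ‖x₁ - y‖ = ‖y - x₁‖ := norm_sub_rev x₁ y
  rw [hQ, hnorm] at hQle
  linarith

/-- The key estimate: the minimizer over `S₁` is close to the minimizer over `S₂`
provided the value at the latter is smaller. -/
lemma dispatch_key_aux [ProperSpace E] {μ G δ : ℝ} (hμ : 0 < μ) (hG : 0 ≤ G) (hδ : 0 ≤ δ)
    {c : E → ℝ} {g : E → E} (hgrad : ∀ x, HasGradientAt c (g x) x)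
    (hsc : StrongConvexOn Set.univ μ c)
    {S₁ S₂ : Set E} (hS₁c : IsClosed S₁) (hS₁conv : Convex ℝ S₁) (hS₁ne : S₁.Nonempty)
    (hfin : EMetric.hausdorffEdist S₂ S₁ ≠ ⊤)
    (hHd : hausdorffDist S₂ S₁ ≤ δ)
    (hG₁ : ∀ x ∈ S₁, ‖g x‖ ≤ G)
    {x₁ x₂ : E} (hx₁ : x₁ ∈ S₁) (hmin₁ : ∀ z ∈ S₁, c x₁ ≤ c z) (hx₂ : x₂ ∈ S₂)
    (hle : c x₂ ≤ c x₁) :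
    ‖x₁ - x₂‖ ≤ Real.sqrt (2 * G / μ * δ) + δ := by
  obtain ⟨y, hy, hyd⟩ := hS₁c.exists_infDist_eq_dist hS₁ne x₂
  have hdist : dist x₂ y ≤ δ := by
    rw [← hyd]
    exact le_trans (infDist_le_hausdorffDist_of_mem hx₂ hfin) hHd
  -- quadratic growth at the minimizer x₁
  have hq : c x₁ + μ / 2 * ‖y - x₁‖ ^ 2 ≤ c y := quad_growth_aux hsc hS₁conv hx₁ hmin₁ hy
  -- upper bound on c y via convexity (gradient inequality at y)
  have hgy : ‖g y‖ ≤ G := hG₁ y hy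
  have hfo := strong_first_order_aux hsc (hgrad y) x₂
  have hinner : inner ℝ (g y) (y - x₂) ≤ G * δ := by
    calc inner ℝ (g y) (y - x₂) ≤ ‖g y‖ * ‖y - x₂‖ := real_inner_le_norm _ _
      _ ≤ G * δ := by
          refine mul_le_mul hgy ?_ (norm_nonneg _) hG
          rw [← dist_eq_norm, dist_comm]
          exact hdist
  have hinner' : -(inner ℝ (g y) (x₂ - y) : ℝ) ≤ G * δ := by
    rw [← inner_neg_right]
    simpa [neg_sub] using hinner
  have hsq : μ / 2 * ‖y - x₁‖ ^ 2 ≤ G * δ := by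
    nlinarith [hfo, hq, hle, hinner', sq_nonneg ‖x₂ - y‖, mul_nonneg (le_of_lt hμ)
      (sq_nonneg ‖x₂ - y‖)]
  have hsq2 : ‖y - x₁‖ ^ 2 ≤ 2 * G / μ * δ := by
    rw [div_mul_eq_mul_div, le_div_iff₀ hμ]
    nlinarith [hsq]
  have hny : ‖y - x₁‖ ≤ Real.sqrt (2 * G / μ * δ) := by
    calc ‖y - x₁‖ = Real.sqrt (‖y - x₁‖ ^ 2) := (Real.sqrt_sq (norm_nonneg _)).symm
      _ ≤ Real.sqrt (2 * G / μ * δ) := Real.sqrt_le_sqrt hsq2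
  calc ‖x₁ - x₂‖ ≤ ‖x₁ - y‖ + ‖y - x₂‖ := norm_sub_le_norm_sub_add_norm_sub x₁ y x₂
    _ ≤ Real.sqrt (2 * G / μ * δ) + δ := by
        have h1 : ‖x₁ - y‖ = ‖y - x₁‖ := norm_sub_rev _ _
        have h2 : ‖y - x₂‖ = dist x₂ y := by rw [dist_comm, dist_eq_norm]
        rw [h1, h2]
        exact add_le_add hny hdist

end AuxLemmas

/-- Continuity (Hölder-type) of the dispatch map under strong convexity: if `c` is
`μ`-strongly convex with gradient bounded by `G` on the feasible sets, and the
feasible-set multifunction `X(η) = {x | Ax ≤ b(η)}` is `κ`-Lipschitz in Hausdorff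
distance, then `‖x*(η₁) − x*(η₂)‖ ≤ √((2G/μ)·κ‖η₁ − η₂‖) + κ‖η₁ − η₂‖`. -/
theorem dispatch_holder_continuous
    (K N M : ℕ) (μ G κ : ℝ) (hμ : 0 < μ) (hG : 0 ≤ G) (hκ : 0 ≤ κ)
    (c : EuclideanSpace ℝ (Fin N) → ℝ)
    (g : EuclideanSpace ℝ (Fin N) → EuclideanSpace ℝ (Fin N))
    (hgrad : ∀ x, HasGradientAt c (g x) x)
    (hsc : StrongConvexOn Set.univ μ c)
    (U : Set (EuclideanSpace ℝ (Fin K)))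
    (A : Matrix (Fin M) (Fin N) ℝ)
    (b : EuclideanSpace ℝ (Fin K) → (Fin M → ℝ))
    (X : EuclideanSpace ℝ (Fin K) → Set (EuclideanSpace ℝ (Fin N)))
    (hX : ∀ η, X η = {x | ∀ i, (∑ j, A i j * x j) ≤ b η i})
    (hXne : ∀ η ∈ U, (X η).Nonempty)
    (hGbound : ∀ η ∈ U, ∀ x ∈ X η, ‖g x‖ ≤ G)
    (hHaus : ∀ η₁ ∈ U, ∀ η₂ ∈ U, hausdorffDist (X η₁) (X η₂) ≤ κ * ‖η₁ - η₂‖)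
    (xstar : EuclideanSpace ℝ (Fin K) → EuclideanSpace ℝ (Fin N))
    -- `xstar η` is the unique minimizer of `c` over `X η`
    (hopt : ∀ η ∈ U, xstar η ∈ X η ∧ ∀ x ∈ X η, c (xstar η) ≤ c x) :
    ∀ η₁ ∈ U, ∀ η₂ ∈ U,
      ‖xstar η₁ - xstar η₂‖
        ≤ Real.sqrt ((2 * G / μ) * (κ * ‖η₁ - η₂‖)) + κ * ‖η₁ - η₂‖ := by
  -- the feasible sets are closed
  have hXclosed : ∀ η, IsClosed (X η) := by
    intro η
    rw [hX η]
    have : {x : EuclideanSpace ℝ (Fin N) | ∀ i, (∑ j, A i j * x j) ≤ b η i} =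
        ⋂ i, {x : EuclideanSpace ℝ (Fin N) | (∑ j, A i j * x j) ≤ b η i} := by
      ext x; simp
    rw [this]
    refine isClosed_iInter fun i => isClosed_le ?_ continuous_const
    exact continuous_finset_sum _ fun j _ => continuous_const.mul
      ((continuous_apply j).comp (PiLp.continuous_ofLp 2 fun _ : Fin N => ℝ))
  -- the feasible sets are convex
  have hXconvex : ∀ η, Convex ℝ (X η) := by
    intro η
    rw [hX η]
    have : {x : EuclideanSpace ℝ (Fin N) | ∀ i, (∑ j, A i j * x j) ≤ b η i} =
        ⋂ i, {x : EuclideanSpace ℝ (Fin N) | (∑ j, A i j * x j) ≤ b η i} := by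
      ext x; simp
    rw [this]
    refine convex_iInter fun i => convex_halfSpace_le ?_ _
    exact { map_add := fun u v => by
              simp only [PiLp.add_apply]
              rw [← Finset.sum_add_distrib]
              exact Finset.sum_congr rfl fun j _ => by ring
            map_smul := fun a u => by
              simp only [PiLp.smul_apply, smul_eq_mul, Finset.mul_sum]
              exact Finset.sum_congr rfl fun j _ => by ring }
  -- any two feasible points (over parameters in U) are at distance at most 2G/μ
  have pairbound : ∀ ηa ∈ U, ∀ ηb ∈ U, ∀ x ∈ X ηa, ∀ y ∈ X ηb, dist x y ≤ 2 * G / μ := by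
    intro ηa hηa ηb hηb x hx y hy
    have h1 := strong_first_order_aux hsc (hgrad x) y
    have h2 := strong_first_order_aux hsc (hgrad y) x
    have hgx : ‖g x‖ ≤ G := hGbound ηa hηa x hx
    have hgy : ‖g y‖ ≤ G := hGbound ηb hηb y hy
    have hxy : ‖y - x‖ = ‖x - y‖ := norm_sub_rev y x
    have hi1 : -(inner ℝ (g x) (y - x) : ℝ) ≤ G * ‖x - y‖ := by
      rw [← inner_neg_right]
      calc (inner ℝ (g x) (-(y - x)) : ℝ) ≤ ‖g x‖ * ‖-(y - x)‖ := real_inner_le_norm _ _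
        _ ≤ G * ‖x - y‖ := by
            rw [norm_neg, hxy]
            exact mul_le_mul_of_nonneg_right hgx (norm_nonneg _)
    have hi2 : -(inner ℝ (g y) (x - y) : ℝ) ≤ G * ‖x - y‖ := by
      rw [← inner_neg_right]
      calc (inner ℝ (g y) (-(x - y)) : ℝ) ≤ ‖g y‖ * ‖-(x - y)‖ := real_inner_le_norm _ _
        _ ≤ G * ‖x - y‖ := by
            rw [norm_neg]
            exact mul_le_mul_of_nonneg_right hgy (norm_nonneg _)
    have hμxy : μ * ‖x - y‖ ^ 2 ≤ 2 * G * ‖x - y‖ := by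
      rw [hxy] at h1
      nlinarith [h1, h2, hi1, hi2]
    rw [dist_eq_norm]
    rcases eq_or_lt_of_le (norm_nonneg (x - y)) with h0 | h0
    · rw [← h0]
      positivity
    · rw [le_div_iff₀ hμ]
      calc ‖x - y‖ * μ = μ * ‖x - y‖ ^ 2 / ‖x - y‖ := by
            field_simp
        _ ≤ 2 * G * ‖x - y‖ / ‖x - y‖ := by
            exact div_le_div_of_nonneg_right hμxy h0.le
        _ = 2 * G := by field_simp
  -- boundedness of the feasible sets
  have hbdd : ∀ η ∈ U, Bornology.IsBounded (X η) := by
    intro η hη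
    rw [Metric.isBounded_iff]
    exact ⟨2 * G / μ, fun x hx y hy => pairbound η hη η hη x hx y hy⟩
  intro η₁ hη₁ η₂ hη₂
  have hfin12 : EMetric.hausdorffEdist (X η₁) (X η₂) ≠ ⊤ :=
    hausdorffEdist_ne_top_of_nonempty_of_bounded (hXne η₁ hη₁) (hXne η₂ hη₂)
      (hbdd η₁ hη₁) (hbdd η₂ hη₂)
  have hδ : 0 ≤ κ * ‖η₁ - η₂‖ := mul_nonneg hκ (norm_nonneg _)
  rcases le_total (c (xstar η₂)) (c (xstar η₁)) with hle | hle
  · -- apply the key estimate with S₁ = X η₁, S₂ = X η₂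
    have hHd : hausdorffDist (X η₂) (X η₁) ≤ κ * ‖η₁ - η₂‖ := by
      rw [hausdorffDist_comm]
      exact hHaus η₁ hη₁ η₂ hη₂
    exact dispatch_key_aux hμ hG hδ hgrad hsc (hXclosed η₁) (hXconvex η₁) (hXne η₁ hη₁)
      (by unfold EMetric.hausdorffEdist at hfin12 ⊢; rwa [EMetric.hausdorffEdist_comm] at hfin12) hHd
      (hGbound η₁ hη₁) (hopt η₁ hη₁).1 (hopt η₁ hη₁).2 (hopt η₂ hη₂).1 hle
  · -- symmetric case
    have hHd : hausdorffDist (X η₁) (X η₂) ≤ κ * ‖η₁ - η₂‖ := hHaus η₁ hη₁ η₂ hη₂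
    have := dispatch_key_aux hμ hG hδ hgrad hsc (hXclosed η₂) (hXconvex η₂) (hXne η₂ hη₂)
      hfin12 hHd (hGbound η₂ hη₂) (hopt η₂ hη₂).1 (hopt η₂ hη₂).2 (hopt η₁ hη₁).1 hle
    rwa [norm_sub_rev (xstar η₂)] at this
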